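/- arXiv:1306.5085 — 2 statements merged into one kernel-verified Lean document; each statement's English description precedes it below -/
import Mathlib

section
/- (Sylvester's theorem) The sequence of coefficients $p_0(\ell,m), p_1(\ell,m), \ldots, p_{\ell m}(\ell,m)$ of the q-binomial coefficient $\binom{m+\ell}{m}_q$ is unimodal: $p_0 \le p_1 \le \cdots \le p_{\lfloor \ell m/2 \rfloor}$ and $p_{\lceil \ell m/2 \rceil} \ge \cdots \ge p_{\ell m}$. -/
open Polynomial Finset

namespace SylvesterAux

/-- minimal sum of `ℓ` distinct naturals -/
def T0 (ℓ : ℕ) : ℕ := ∑ i ∈ Finset.range ℓ, i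

/-- the set of "weight `k`" basis subsets: subsets of `range (ℓ+m)` of
cardinality `ℓ` and element-sum `T0 ℓ + k`. -/
def B (ℓ m k : ℕ) : Finset (Finset ℕ) :=
  ((Finset.range (ℓ+m)).powerset).filter (fun S => S.card = ℓ ∧ ∑ i ∈ S, i = T0 ℓ + k)

lemma mem_B {ℓ m k : ℕ} {S : Finset ℕ} :
    S ∈ B ℓ m k ↔ S ⊆ Finset.range (ℓ+m) ∧ S.card = ℓ ∧ ∑ i ∈ S, i = T0 ℓ + k := by
  simp [B, and_assoc]

variable (ℓ m : ℕ)

/-- coefficient of the lowering move across the edge `(j, j+1)` -/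
def cc (j : ℕ) : ℚ := (j+1 : ℚ) * ((ℓ+m : ℚ) - 1 - j)

/-- diagonal entry -/
def eta (T : Finset ℕ) : ℚ := ∑ i ∈ T, ((ℓ+m : ℚ) - 1 - 2*i)

/-- up-move across edge `(j,j+1)` -/
def U (j : ℕ) (T : Finset ℕ) : Finset ℕ := insert (j+1) (T.erase j)

/-- down-move across edge `(j,j+1)` -/
def D (j : ℕ) (T : Finset ℕ) : Finset ℕ := insert j (T.erase (j+1))

/-- available up-moves of `T` (staying inside `range (ℓ+m)`) -/
def uset (T : Finset ℕ) : Finset ℕ := T.filter (fun j => j+1 ∉ T ∧ j+1 < ℓ+m)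

/-- edges over which `T` arises by an (in-range) up-move; equivalently available
down-moves of `T`. -/
def dset (T : Finset ℕ) : Finset ℕ :=
  (Finset.range (ℓ+m)).filter (fun j => j ∉ T ∧ j+1 ∈ T ∧ j+1 < ℓ+m)

lemma mem_uset' {T : Finset ℕ} {j : ℕ} :
    j ∈ uset ℓ m T ↔ j ∈ T ∧ j+1 ∉ T ∧ j+1 < ℓ+m := by simp [uset, and_assoc]

lemma mem_dset' {T : Finset ℕ} {j : ℕ} :
    j ∈ dset ℓ m T ↔ j ∉ T ∧ j+1 ∈ T ∧ j+1 < ℓ+m := by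
  constructor
  · intro h; simp only [dset, mem_filter] at h; tauto
  · intro h; simp only [dset, mem_filter, Finset.mem_range]; exact ⟨by omega, h⟩

variable {ℓ m}

lemma mem_uset {T : Finset ℕ} {j : ℕ} :
    j ∈ uset ℓ m T ↔ j ∈ T ∧ j+1 ∉ T ∧ j+1 < ℓ+m := mem_uset' ℓ m

lemma mem_dset {T : Finset ℕ} {j : ℕ} :
    j ∈ dset ℓ m T ↔ j ∉ T ∧ j+1 ∈ T ∧ j+1 < ℓ+m := mem_dset' ℓ m

lemma D_U {T : Finset ℕ} {j : ℕ} (hj : j ∈ T) (hj1 : j+1 ∉ T) : D j (U j T) = T := by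
  ext a
  simp only [U, D, Finset.mem_insert, Finset.mem_erase]
  constructor
  · rintro (rfl | ⟨h1, (h2 | ⟨h3, h4⟩)⟩) <;> first | assumption | omega
  · intro ha
    by_cases h : a = j
    · exact Or.inl h
    · exact Or.inr ⟨fun h' => hj1 (h' ▸ ha), Or.inr ⟨h, ha⟩⟩

lemma U_D {T : Finset ℕ} {j : ℕ} (hj : j ∉ T) (hj1 : j+1 ∈ T) : U j (D j T) = T := by
  ext a
  simp only [U, D, Finset.mem_insert, Finset.mem_erase]
  constructor
  · rintro (rfl | ⟨h1, (h2 | ⟨h3, h4⟩)⟩) <;> first | assumption | omega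
  · intro ha
    by_cases h : a = j + 1
    · exact Or.inl h
    · exact Or.inr ⟨fun h' => hj (h' ▸ ha), Or.inr ⟨h, ha⟩⟩

lemma card_U {T : Finset ℕ} {j : ℕ} (hj : j ∈ T) (hj1 : j+1 ∉ T) :
    (U j T).card = T.card := by
  rw [U, Finset.card_insert_of_notMem (fun h => hj1 (Finset.mem_of_mem_erase h)),
    Finset.card_erase_of_mem hj]
  have : 1 ≤ T.card := Finset.card_pos.2 ⟨j, hj⟩
  omega

lemma sum_U {T : Finset ℕ} {j : ℕ} (hj : j ∈ T) (hj1 : j+1 ∉ T) :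
    ∑ i ∈ U j T, i = (∑ i ∈ T, i) + 1 := by
  have h1 : ∑ i ∈ U j T, i = (j+1) + ∑ i ∈ T.erase j, i :=
    Finset.sum_insert (fun h => hj1 (Finset.mem_of_mem_erase h))
  have h2 : (∑ i ∈ T.erase j, i) + j = ∑ i ∈ T, i := Finset.sum_erase_add _ _ hj
  omega

lemma card_D {T : Finset ℕ} {j : ℕ} (hj : j ∉ T) (hj1 : j+1 ∈ T) :
    (D j T).card = T.card := by
  rw [D, Finset.card_insert_of_notMem (fun h => hj (Finset.mem_of_mem_erase h)),
    Finset.card_erase_of_mem hj1]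
  have : 1 ≤ T.card := Finset.card_pos.2 ⟨j+1, hj1⟩
  omega

lemma sum_D {T : Finset ℕ} {j : ℕ} (hj : j ∉ T) (hj1 : j+1 ∈ T) :
    (∑ i ∈ D j T, i) + 1 = ∑ i ∈ T, i := by
  have h1 : ∑ i ∈ D j T, i = j + ∑ i ∈ T.erase (j+1), i :=
    Finset.sum_insert (fun h => hj (Finset.mem_of_mem_erase h))
  have h2 : (∑ i ∈ T.erase (j+1), i) + (j+1) = ∑ i ∈ T, i := Finset.sum_erase_add _ _ hj1
  omega

lemma U_mem_B {S : Finset ℕ} {k j : ℕ} (hS : S ∈ B ℓ m k) (hj : j ∈ S) (hj1 : j+1 ∉ S)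
    (hN : j+1 < ℓ+m) : U j S ∈ B ℓ m (k+1) := by
  obtain ⟨hsub, hcard, hsum⟩ := mem_B.1 hS
  refine mem_B.2 ⟨?_, by rw [card_U hj hj1]; exact hcard, by rw [sum_U hj hj1, hsum]; ring⟩
  intro a ha
  rcases Finset.mem_insert.1 ha with rfl | h
  · exact Finset.mem_range.2 hN
  · exact hsub (Finset.mem_of_mem_erase h)

lemma D_mem_B {T : Finset ℕ} {k j : ℕ} (hT : T ∈ B ℓ m (k+1)) (hj : j ∉ T) (hj1 : j+1 ∈ T) :
    D j T ∈ B ℓ m k := by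
  obtain ⟨hsub, hcard, hsum⟩ := mem_B.1 hT
  refine mem_B.2 ⟨?_, by rw [card_D hj hj1]; exact hcard, ?_⟩
  · intro a ha
    rcases Finset.mem_insert.1 ha with rfl | h
    · have := Finset.mem_range.1 (hsub hj1); exact Finset.mem_range.2 (by omega)
    · exact hsub (Finset.mem_of_mem_erase h)
  · have := sum_D hj hj1
    omega

variable (ℓ m)

/-- the raising operator -/
def Fop (v : Finset ℕ → ℚ) : Finset ℕ → ℚ := fun T => ∑ j ∈ dset ℓ m T, v (D j T)

/-- the lowering operator -/
def Eop (v : Finset ℕ → ℚ) : Finset ℕ → ℚ := fun T => ∑ j ∈ uset ℓ m T, cc ℓ m j * v (U j T)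

variable {ℓ m}

lemma mem_U {T : Finset ℕ} {j a : ℕ} : a ∈ U j T ↔ a = j+1 ∨ (a ≠ j ∧ a ∈ T) := by
  simp [U, Finset.mem_insert, Finset.mem_erase]

lemma mem_D {T : Finset ℕ} {j a : ℕ} : a ∈ D j T ↔ a = j ∨ (a ≠ j+1 ∧ a ∈ T) := by
  simp [D, Finset.mem_insert, Finset.mem_erase]

lemma dset_U {T : Finset ℕ} {j : ℕ} (hj : j ∈ T) (hj1 : j+1 ∉ T) (hN : j+1 < ℓ+m) :
    dset ℓ m (U j T) = insert j ((dset ℓ m T).filter (fun jd => jd+1 ≠ j ∧ jd ≠ j+1)) := by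
  ext jd
  simp only [mem_dset, mem_U, Finset.mem_insert, Finset.mem_filter]
  constructor
  · rintro ⟨h1, h2, h3⟩
    by_cases hd : jd = j
    · exact Or.inl hd
    · push_neg at h1
      rcases h2 with h2 | ⟨h2a, h2b⟩
      · omega
      · exact Or.inr ⟨⟨h1.2 hd, h2b, h3⟩, h2a, h1.1⟩
  · rintro (rfl | ⟨⟨h1, h2, h3⟩, h4, h5⟩)
    · refine ⟨?_, Or.inl rfl, hN⟩
      push_neg
      exact ⟨by omega, fun h => (h rfl).elim⟩
    · refine ⟨by push_neg; exact ⟨h5, fun _ => h1⟩, Or.inr ⟨h4, h2⟩, h3⟩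

lemma uset_D {T : Finset ℕ} {j : ℕ} (hj : j ∉ T) (hj1 : j+1 ∈ T) (hN : j+1 < ℓ+m) :
    uset ℓ m (D j T) = insert j ((uset ℓ m T).filter (fun ju => ju+1 ≠ j ∧ ju ≠ j+1)) := by
  ext ju
  simp only [mem_uset, mem_D, Finset.mem_insert, Finset.mem_filter]
  constructor
  · rintro ⟨h1, h2, h3⟩
    by_cases hd : ju = j
    · exact Or.inl hd
    · push_neg at h2
      rcases h1 with h1 | ⟨h1a, h1b⟩
      · omega
      · exact Or.inr ⟨⟨h1b, h2.2 (by omega), h3⟩, h2.1, h1a⟩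
  · rintro (rfl | ⟨⟨h1, h2, h3⟩, h4, h5⟩)
    · refine ⟨Or.inl rfl, ?_, hN⟩
      push_neg
      exact ⟨by omega, fun h => (h rfl).elim⟩
    · refine ⟨Or.inr ⟨h5, h1⟩, ?_, h3⟩
      push_neg
      exact ⟨h4, fun _ => h2⟩

lemma D_U_comm {T : Finset ℕ} {j jd : ℕ} (hd : jd ≠ j) (h1 : jd+1 ≠ j) (h2 : jd ≠ j+1) :
    D jd (U j T) = U j (D jd T) := by
  ext a
  by_cases ha : a ∈ T <;>
    simp only [U, D, Finset.mem_insert, Finset.mem_erase, ha, and_true, and_false, iff_true,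
      iff_false, or_false, not_or, not_and] <;> omega

/-- `cc` shifted down by one -/
def ccm (ℓ m i : ℕ) : ℚ := if i = 0 then 0 else cc ℓ m (i-1)

lemma ccm_succ {j : ℕ} : ccm ℓ m (j+1) = cc ℓ m j := by simp [ccm]

lemma cc_sub_ccm (i : ℕ) : cc ℓ m i - ccm ℓ m i = ((ℓ+m : ℚ) - 1 - 2*i) := by
  rcases i with _ | j
  · simp [cc, ccm]
  · rw [ccm_succ]
    simp only [cc]
    push_cast
    ring

lemma cc_top (h : 0 < ℓ+m) : cc ℓ m (ℓ+m-1) = 0 := by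
  simp only [cc]
  have : ((ℓ+m-1 : ℕ) : ℚ) = (ℓ+m : ℚ) - 1 := by push_cast [h]; ring
  rw [this]
  ring

lemma diag {T : Finset ℕ} (hT : T ⊆ Finset.range (ℓ+m)) :
    (∑ j ∈ uset ℓ m T, cc ℓ m j) - (∑ j ∈ dset ℓ m T, cc ℓ m j) = eta ℓ m T := by
  classical
  have key1 : ∑ i ∈ T.filter (fun i => i+1 ∉ T), cc ℓ m i = ∑ j ∈ uset ℓ m T, cc ℓ m j := by
    refine (Finset.sum_subset ?_ ?_).symm
    · intro x hx
      obtain ⟨h1, h2, _⟩ := mem_uset.1 hx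
      exact Finset.mem_filter.2 ⟨h1, h2⟩
    · intro x hx hx'
      obtain ⟨hxT, hx1⟩ := Finset.mem_filter.1 hx
      have hxN : x < ℓ+m := Finset.mem_range.1 (hT hxT)
      have : x = ℓ+m-1 := by
        by_contra h
        exact hx' (mem_uset.2 ⟨hxT, hx1, by omega⟩)
      rw [this]; exact cc_top (by omega)
  have split1 : ∑ i ∈ T, cc ℓ m i
      = ∑ i ∈ T.filter (fun i => i+1 ∈ T), cc ℓ m i
        + ∑ j ∈ uset ℓ m T, cc ℓ m j := by
    rw [← key1, Finset.sum_filter_add_sum_filter_not]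
  -- now the ccm side
  have himg1 : (dset ℓ m T).image (· + 1) = T.filter (fun t => t ≠ 0 ∧ t-1 ∉ T) := by
    ext t
    simp only [Finset.mem_image, mem_dset, Finset.mem_filter]
    constructor
    · rintro ⟨j, ⟨hj, hj1, hjN⟩, rfl⟩
      exact ⟨hj1, by omega, by simpa using hj⟩
    · rintro ⟨ht, h0, h1⟩
      exact ⟨t-1, ⟨h1, by simpa [Nat.sub_add_cancel (by omega : 1 ≤ t)] using ht,
        by have := Finset.mem_range.1 (hT ht); omega⟩, by omega⟩
  have himg2 : (T.filter (fun i => i+1 ∈ T)).image (· + 1)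
      = T.filter (fun t => t ≠ 0 ∧ t-1 ∈ T) := by
    ext t
    simp only [Finset.mem_image, Finset.mem_filter]
    constructor
    · rintro ⟨j, ⟨hj, hj1⟩, rfl⟩
      exact ⟨hj1, by omega, by simpa using hj⟩
    · rintro ⟨ht, h0, h1⟩
      exact ⟨t-1, ⟨h1, by simpa [Nat.sub_add_cancel (by omega : 1 ≤ t)] using ht⟩, by omega⟩
  have sum_img : ∀ X : Finset ℕ, ∑ t ∈ X.image (· + 1), ccm ℓ m t = ∑ j ∈ X, cc ℓ m j := by
    intro X
    rw [Finset.sum_image (by intro a _ b _ h; simp only at h; omega)]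
    exact Finset.sum_congr rfl fun j _ => ccm_succ
  have hdisj : Disjoint (T.filter (fun t => t ≠ 0 ∧ t-1 ∉ T)) (T.filter (fun t => t ≠ 0 ∧ t-1 ∈ T)) := by
    rw [Finset.disjoint_filter]
    rintro x _ ⟨_, h⟩ ⟨_, h'⟩
    exact h h'
  have hunion : T.filter (fun t => t ≠ 0 ∧ t-1 ∉ T) ∪ T.filter (fun t => t ≠ 0 ∧ t-1 ∈ T)
      = T.filter (fun t => t ≠ 0) := by
    rw [← Finset.filter_or]
    exact Finset.filter_congr fun x _ => by tauto
  have split2 : ∑ i ∈ T, ccm ℓ m i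
      = ∑ j ∈ dset ℓ m T, cc ℓ m j + ∑ i ∈ T.filter (fun i => i+1 ∈ T), cc ℓ m i := by
    have h0 : ∑ i ∈ T, ccm ℓ m i = ∑ i ∈ T.filter (fun t => t ≠ 0), ccm ℓ m i := by
      refine (Finset.sum_subset (Finset.filter_subset _ _) ?_).symm
      intro x hx hx'
      have : x = 0 := by
        by_contra h
        exact hx' (Finset.mem_filter.2 ⟨hx, h⟩)
      simp [this, ccm]
    rw [h0, ← hunion, Finset.sum_union hdisj, ← himg1, ← himg2, sum_img, sum_img]
  have final : ∑ i ∈ T, (cc ℓ m i - ccm ℓ m i) = eta ℓ m T := by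
    rw [eta]
    exact Finset.sum_congr rfl fun i _ => cc_sub_ccm i
  rw [Finset.sum_sub_distrib, split1, split2] at final
  linarith [final]

/-- the key sl₂ commutation relation, pointwise on box subsets -/
lemma comm_op (v : Finset ℕ → ℚ) {T : Finset ℕ} (hT : T ⊆ Finset.range (ℓ+m)) :
    Eop ℓ m (Fop ℓ m v) T = eta ℓ m T * v T + Fop ℓ m (Eop ℓ m v) T := by
  classical
  have L1 : ∀ j ∈ uset ℓ m T, (Fop ℓ m v) (U j T)
      = v T + ∑ jd ∈ (dset ℓ m T).filter (fun jd => jd+1 ≠ j ∧ jd ≠ j+1), v (D jd (U j T)) := by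
    intro j hj
    obtain ⟨hjT, hj1, hjN⟩ := mem_uset.1 hj
    have hnot : j ∉ (dset ℓ m T).filter (fun jd => jd+1 ≠ j ∧ jd ≠ j+1) := by
      intro h
      exact (mem_dset.1 (Finset.mem_filter.1 h).1).1 hjT
    rw [show (Fop ℓ m v) (U j T) = ∑ jd ∈ dset ℓ m (U j T), v (D jd (U j T)) from rfl,
      dset_U hjT hj1 hjN, Finset.sum_insert hnot, D_U hjT hj1]
  have L2 : ∀ jd ∈ dset ℓ m T, (Eop ℓ m v) (D jd T)
      = cc ℓ m jd * v T + ∑ ju ∈ (uset ℓ m T).filter (fun ju => ju+1 ≠ jd ∧ ju ≠ jd+1),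
          cc ℓ m ju * v (U ju (D jd T)) := by
    intro jd hjd
    obtain ⟨hjT, hj1, hjN⟩ := mem_dset.1 hjd
    have hnot : jd ∉ (uset ℓ m T).filter (fun ju => ju+1 ≠ jd ∧ ju ≠ jd+1) := by
      intro h
      exact hjT (mem_uset.1 (Finset.mem_filter.1 h).1).1
    rw [show (Eop ℓ m v) (D jd T) = ∑ ju ∈ uset ℓ m (D jd T), cc ℓ m ju * v (U ju (D jd T))
        from rfl,
      uset_D hjT hj1 hjN, Finset.sum_insert hnot, U_D hjT hj1]
  have lhs : Eop ℓ m (Fop ℓ m v) T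
      = (∑ j ∈ uset ℓ m T, cc ℓ m j) * v T
        + ∑ j ∈ uset ℓ m T, ∑ jd ∈ (dset ℓ m T).filter (fun jd => jd+1 ≠ j ∧ jd ≠ j+1),
            cc ℓ m j * v (D jd (U j T)) := by
    calc Eop ℓ m (Fop ℓ m v) T = ∑ j ∈ uset ℓ m T, cc ℓ m j * (Fop ℓ m v) (U j T) := rfl
      _ = ∑ j ∈ uset ℓ m T, (cc ℓ m j * v T
            + ∑ jd ∈ (dset ℓ m T).filter (fun jd => jd+1 ≠ j ∧ jd ≠ j+1),
                cc ℓ m j * v (D jd (U j T))) := by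
          refine Finset.sum_congr rfl fun j hj => ?_
          rw [L1 j hj, mul_add, Finset.mul_sum]
      _ = _ := by rw [Finset.sum_add_distrib, Finset.sum_mul]
  have rhs : Fop ℓ m (Eop ℓ m v) T
      = (∑ jd ∈ dset ℓ m T, cc ℓ m jd) * v T
        + ∑ jd ∈ dset ℓ m T, ∑ ju ∈ (uset ℓ m T).filter (fun ju => ju+1 ≠ jd ∧ ju ≠ jd+1),
            cc ℓ m ju * v (U ju (D jd T)) := by
    calc Fop ℓ m (Eop ℓ m v) T = ∑ jd ∈ dset ℓ m T, (Eop ℓ m v) (D jd T) := rfl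
      _ = ∑ jd ∈ dset ℓ m T, (cc ℓ m jd * v T
            + ∑ ju ∈ (uset ℓ m T).filter (fun ju => ju+1 ≠ jd ∧ ju ≠ jd+1),
                cc ℓ m ju * v (U ju (D jd T))) :=
          Finset.sum_congr rfl L2
      _ = _ := by rw [Finset.sum_add_distrib, Finset.sum_mul]
  have swap : ∑ j ∈ uset ℓ m T, ∑ jd ∈ (dset ℓ m T).filter (fun jd => jd+1 ≠ j ∧ jd ≠ j+1),
        cc ℓ m j * v (D jd (U j T))
      = ∑ jd ∈ dset ℓ m T, ∑ ju ∈ (uset ℓ m T).filter (fun ju => ju+1 ≠ jd ∧ ju ≠ jd+1),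
          cc ℓ m ju * v (U ju (D jd T)) := by
    rw [Finset.sum_comm' (t' := dset ℓ m T)
      (s' := fun jd => (uset ℓ m T).filter (fun ju => ju+1 ≠ jd ∧ ju ≠ jd+1))
      (by
        intro x y
        simp only [Finset.mem_filter]
        tauto)]
    refine Finset.sum_congr rfl fun jd hjd => Finset.sum_congr rfl fun j hj => ?_
    obtain ⟨hju, hc1, hc2⟩ := Finset.mem_filter.1 hj
    have hjT : j ∈ T := (mem_uset.1 hju).1
    have hdT : jd ∉ T := (mem_dset.1 hjd).1
    rw [D_U_comm (fun h => hdT (by rw [h]; exact hjT)) (by omega) (by omega)]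
  rw [lhs, rhs, swap, ← diag hT]
  ring

variable (ℓ m)

lemma Fop_add (a b : Finset ℕ → ℚ) : Fop ℓ m (a + b) = Fop ℓ m a + Fop ℓ m b := by
  funext T
  simp [Fop, Finset.sum_add_distrib]

lemma Fop_smul (c : ℚ) (a : Finset ℕ → ℚ) : Fop ℓ m (c • a) = c • Fop ℓ m a := by
  funext T
  simp [Fop, Finset.mul_sum]

lemma Eop_add (a b : Finset ℕ → ℚ) : Eop ℓ m (a + b) = Eop ℓ m a + Eop ℓ m b := by
  funext T
  simp [Eop, Finset.sum_add_distrib, mul_add]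

lemma Eop_smul (c : ℚ) (a : Finset ℕ → ℚ) : Eop ℓ m (c • a) = c • Eop ℓ m a := by
  funext T
  simp only [Eop, Pi.smul_apply, smul_eq_mul, Finset.mul_sum]
  exact Finset.sum_congr rfl fun j _ => by ring

/-- weight space -/
abbrev V (k : ℕ) : Type := ↥(B ℓ m k) → ℚ

/-- extension by zero -/
def ext' (k : ℕ) (v : V ℓ m k) : Finset ℕ → ℚ :=
  fun S => if h : S ∈ B ℓ m k then v ⟨S, h⟩ else 0

lemma ext'_mem {k : ℕ} (v : V ℓ m k) {S : Finset ℕ} (h : S ∈ B ℓ m k) :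
    ext' ℓ m k v S = v ⟨S, h⟩ := dif_pos h

lemma ext'_support {k : ℕ} (v : V ℓ m k) {S : Finset ℕ} (h : S ∉ B ℓ m k) :
    ext' ℓ m k v S = 0 := dif_neg h

lemma ext'_add {k : ℕ} (a b : V ℓ m k) :
    ext' ℓ m k (a + b) = ext' ℓ m k a + ext' ℓ m k b := by
  funext S
  by_cases h : S ∈ B ℓ m k <;> simp [ext', h]

lemma ext'_smul {k : ℕ} (c : ℚ) (a : V ℓ m k) :
    ext' ℓ m k (c • a) = c • ext' ℓ m k a := by
  funext S
  by_cases h : S ∈ B ℓ m k <;> simp [ext', h]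

lemma Fop_support {k : ℕ} (w : Finset ℕ → ℚ) (hw : ∀ S, S ∉ B ℓ m k → w S = 0)
    {T : Finset ℕ} (hT : T ∉ B ℓ m (k+1)) : Fop ℓ m w T = 0 := by
  refine Finset.sum_eq_zero fun j hj => ?_
  obtain ⟨h1, h2, h3⟩ := mem_dset.1 hj
  by_contra hne
  have hD : D j T ∈ B ℓ m k := by
    by_contra hD
    exact hne (hw _ hD)
  have hjD : j ∈ D j T := mem_D.2 (Or.inl rfl)
  have hjD1 : j+1 ∉ D j T := fun h => by
    rcases mem_D.1 h with h | ⟨h, _⟩ <;> omega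
  have := U_mem_B hD hjD hjD1 h3
  rw [U_D h1 h2] at this
  exact hT this

lemma Eop_support {k : ℕ} (w : Finset ℕ → ℚ) (hw : ∀ S, S ∉ B ℓ m (k+1) → w S = 0)
    {T : Finset ℕ} (hT : T ∉ B ℓ m k) : Eop ℓ m w T = 0 := by
  refine Finset.sum_eq_zero fun j hj => ?_
  obtain ⟨h1, h2, h3⟩ := mem_uset.1 hj
  by_contra hne
  have hU : U j T ∈ B ℓ m (k+1) := by
    by_contra hU
    rw [hw _ hU, mul_zero] at hne
    exact hne rfl
  have hjU : j ∉ U j T := fun h => by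
    rcases mem_U.1 h with h | ⟨h, _⟩ <;> omega
  have hjU1 : j+1 ∈ U j T := mem_U.2 (Or.inl rfl)
  have := D_mem_B hU hjU hjU1
  rw [D_U h1 h2] at this
  exact hT this

/-- the raising operator as a linear map between weight spaces -/
def Fmap (k : ℕ) : V ℓ m k →ₗ[ℚ] V ℓ m (k+1) where
  toFun v := fun T => Fop ℓ m (ext' ℓ m k v) T.val
  map_add' a b := by
    funext T
    show Fop ℓ m (ext' ℓ m k (a + b)) T.val = _
    rw [ext'_add, Fop_add]
    rfl
  map_smul' c a := by
    funext T
    show Fop ℓ m (ext' ℓ m k (c • a)) T.val = _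
    rw [ext'_smul, Fop_smul]
    rfl

/-- the lowering operator as a linear map between weight spaces -/
def Emap (k : ℕ) : V ℓ m (k+1) →ₗ[ℚ] V ℓ m k where
  toFun v := fun T => Eop ℓ m (ext' ℓ m (k+1) v) T.val
  map_add' a b := by
    funext T
    show Eop ℓ m (ext' ℓ m (k+1) (a + b)) T.val = _
    rw [ext'_add, Eop_add]
    rfl
  map_smul' c a := by
    funext T
    show Eop ℓ m (ext' ℓ m (k+1) (c • a)) T.val = _
    rw [ext'_smul, Eop_smul]
    rfl

lemma ext'_Fmap (k : ℕ) (v : V ℓ m k) :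
    ext' ℓ m (k+1) (Fmap ℓ m k v) = Fop ℓ m (ext' ℓ m k v) := by
  funext S
  by_cases h : S ∈ B ℓ m (k+1)
  · rw [ext'_mem _ _ _ h]; rfl
  · rw [ext'_support _ _ _ h, Fop_support ℓ m _ (fun S hS => ext'_support ℓ m v hS) h]

lemma ext'_Emap (k : ℕ) (v : V ℓ m (k+1)) :
    ext' ℓ m k (Emap ℓ m k v) = Eop ℓ m (ext' ℓ m (k+1) v) := by
  funext S
  by_cases h : S ∈ B ℓ m k
  · rw [ext'_mem _ _ _ h]; rfl
  · rw [ext'_support _ _ _ h, Eop_support ℓ m _ (fun S hS => ext'_support ℓ m v hS) h]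

lemma two_T0' (l : ℕ) : 2 * T0 l + l = l * l := by
  have h := Finset.sum_range_id_mul_two l
  rcases l with _ | l
  · simp [T0]
  · have h2 : (l+1) * (l+1) = (l+1) * ((l+1) - 1) + (l+1) := by
      simp only [Nat.add_sub_cancel]
      ring
    unfold T0
    omega

lemma eta_B {k : ℕ} {T : Finset ℕ} (hT : T ∈ B ℓ m k) :
    eta ℓ m T = (ℓ*m : ℚ) - 2*k := by
  obtain ⟨hsub, hcard, hsum⟩ := mem_B.1 hT
  have h1 : eta ℓ m T = (T.card : ℚ) * ((ℓ+m : ℚ) - 1) - 2 * ((∑ i ∈ T, i : ℕ) : ℚ) := by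
    rw [eta, Finset.sum_sub_distrib]
    push_cast
    rw [Finset.sum_const, ← Finset.mul_sum]
    push_cast
    ring
  rw [h1, hcard, hsum]
  have h2 : ((2 * T0 ℓ + ℓ : ℕ) : ℚ) = ((ℓ * ℓ : ℕ) : ℚ) := by rw [two_T0']
  push_cast at h2 ⊢
  nlinarith [h2]

lemma strictMono_gap {n : ℕ} (f : Fin n → ℕ) (hf : StrictMono f) :
    ∀ (d : ℕ) (i j : Fin n), (j : ℕ) = i + d → f i + d ≤ f j := by
  intro d
  induction d with
  | zero => intro i j hij; have hij' : i = j := Fin.ext (by omega); rw [hij']; omega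
  | succ d ih =>
    intro i j hij
    have hlt : (i : ℕ) + d < n := by omega
    have h1 := ih i ⟨i + d, hlt⟩ rfl
    have h2 : f ⟨i + d, hlt⟩ < f j := hf (by rw [Fin.lt_def]; simp only [Fin.val_mk]; omega)
    omega

lemma strictMono_le {n : ℕ} (f : Fin n → ℕ) (hf : StrictMono f) (i : Fin n) :
    (i : ℕ) ≤ f i := by
  have h0 : (0 : ℕ) < n := i.pos
  have := strictMono_gap f hf i ⟨0, h0⟩ i (by simp only [Fin.val_mk]; omega)
  omega

lemma image_orderEmbOfFin {T : Finset ℕ} {n : ℕ} (h : T.card = n) :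
    Finset.image (T.orderEmbOfFin h) Finset.univ = T := by
  ext a
  simp only [Finset.mem_image, Finset.mem_univ, true_and]
  constructor
  · rintro ⟨i, rfl⟩; exact T.orderEmbOfFin_mem h i
  · intro ha
    have : a ∈ Set.range (T.orderEmbOfFin h) := by rw [Finset.range_orderEmbOfFin]; exact ha
    obtain ⟨i, hi⟩ := this
    exact ⟨i, hi⟩

lemma sum_orderEmbOfFin {T : Finset ℕ} {n : ℕ} (h : T.card = n) :
    ∑ i : Fin n, (T.orderEmbOfFin h i) = ∑ i ∈ T, i := by
  conv_rhs => rw [← image_orderEmbOfFin h]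
  rw [Finset.sum_image (fun a _ b _ hab => (T.orderEmbOfFin h).injective hab)]

lemma T0_le_sum {T : Finset ℕ} {n : ℕ} (h : T.card = n) : T0 n ≤ ∑ i ∈ T, i := by
  rw [← sum_orderEmbOfFin h, T0, ← Fin.sum_univ_eq_sum_range (fun i => i)]
  exact Finset.sum_le_sum fun i _ =>
    strictMono_le _ (T.orderEmbOfFin h).strictMono i

lemma Eop_ext_zero (v : V ℓ m 0) : Eop ℓ m (ext' ℓ m 0 v) = 0 := by
  funext T
  refine Finset.sum_eq_zero fun j hj => ?_
  obtain ⟨h1, h2, h3⟩ := mem_uset.1 hj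
  by_contra hne
  have hU : U j T ∈ B ℓ m 0 := by
    by_contra hU
    rw [ext'_support _ _ _ hU, mul_zero] at hne
    exact hne rfl
  obtain ⟨hsub, hcard, hsum⟩ := mem_B.1 hU
  rw [sum_U h1 h2] at hsum
  rw [card_U h1 h2] at hcard
  have := T0_le_sum (T := T) hcard
  omega

lemma Fop_zero : Fop ℓ m 0 = 0 := by
  funext T
  simp [Fop]

lemma EF_base (v : V ℓ m 0) :
    Emap ℓ m 0 (Fmap ℓ m 0 v) = ((ℓ*m : ℚ)) • v := by
  funext T
  have hT := T.prop
  obtain ⟨hsub, -, -⟩ := mem_B.1 hT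
  have h1 : Emap ℓ m 0 (Fmap ℓ m 0 v) T = Eop ℓ m (Fop ℓ m (ext' ℓ m 0 v)) T.val := by
    show Eop ℓ m (ext' ℓ m 1 (Fmap ℓ m 0 v)) T.val = _
    rw [ext'_Fmap]
  rw [h1, comm_op _ hsub, Eop_ext_zero, Fop_zero, eta_B ℓ m hT,
    ext'_mem _ _ _ T.prop]
  simp

lemma EF_step (k : ℕ) (v : V ℓ m (k+1)) :
    Emap ℓ m (k+1) (Fmap ℓ m (k+1) v)
      = ((ℓ*m : ℚ) - 2*(k+1)) • v + Fmap ℓ m k (Emap ℓ m k v) := by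
  funext T
  have hT := T.prop
  obtain ⟨hsub, -, -⟩ := mem_B.1 hT
  have h1 : Emap ℓ m (k+1) (Fmap ℓ m (k+1) v) T
      = Eop ℓ m (Fop ℓ m (ext' ℓ m (k+1) v)) T.val := by
    show Eop ℓ m (ext' ℓ m (k+2) (Fmap ℓ m (k+1) v)) T.val = _
    rw [ext'_Fmap]
  have h2 : Fop ℓ m (Eop ℓ m (ext' ℓ m (k+1) v)) T.val
      = Fmap ℓ m k (Emap ℓ m k v) T := by
    rw [← ext'_Emap]
    rfl
  rw [h1, comm_op _ hsub, h2, eta_B ℓ m hT, ext'_mem _ _ _ T.prop]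
  simp only [Pi.add_apply, Pi.smul_apply, smul_eq_mul]
  push_cast
  ring_nf

lemma no_nonpos_eig :
    ∀ k, 2*k < ℓ*m → ∀ μ : ℚ, μ ≤ 0 → ∀ v : V ℓ m k,
      Emap ℓ m k (Fmap ℓ m k v) = μ • v → v = 0 := by
  intro k
  induction k with
  | zero =>
    intro h μ hμ v hv
    rw [EF_base] at hv
    have hne : ((ℓ*m : ℚ)) - μ ≠ 0 := by
      have : (0:ℚ) < (ℓ*m : ℕ) := by exact_mod_cast Nat.pos_of_ne_zero (by omega)
      push_cast at this
      intro hc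
      nlinarith
    have : (((ℓ*m : ℚ)) - μ) • v = 0 := by
      rw [sub_smul, hv, sub_self]
    rcases smul_eq_zero.1 this with h | h
    · exact absurd h hne
    · exact h
  | succ k ih =>
    intro h μ hμ v hv
    rw [EF_step] at hv
    set c : ℚ := (ℓ*m : ℚ) - 2*(k+1) with hc_def
    have hc : 0 < c := by
      have : ((2*(k+1) : ℕ) : ℚ) < ((ℓ*m : ℕ) : ℚ) := by exact_mod_cast h
      push_cast at this
      rw [hc_def]
      push_cast
      linarith
    have hF : Fmap ℓ m k (Emap ℓ m k v) = (μ - c) • v := by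
      rw [sub_smul, ← hv]
      abel
    have hEF : Emap ℓ m k (Fmap ℓ m k (Emap ℓ m k v)) = (μ - c) • (Emap ℓ m k v) := by
      rw [hF, map_smul]
    have hw : Emap ℓ m k v = 0 := ih (by omega) (μ - c) (by linarith) _ hEF
    rw [hw, map_zero] at hF
    have hne : μ - c ≠ 0 := by intro hx; linarith
    rcases smul_eq_zero.1 hF.symm with hx | hx
    · exact absurd hx hne
    · exact hx

lemma card_B_le (k : ℕ) (h : 2*k < ℓ*m) : (B ℓ m k).card ≤ (B ℓ m (k+1)).card := by
  have hinj : Function.Injective (Fmap ℓ m k) := by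
    intro a b hab
    have h1 : Fmap ℓ m k (a - b) = 0 := by rw [map_sub, hab, sub_self]
    have h2 : Emap ℓ m k (Fmap ℓ m k (a - b)) = (0 : ℚ) • (a - b) := by
      rw [h1, map_zero, zero_smul]
    have := no_nonpos_eig ℓ m k h 0 le_rfl _ h2
    exact sub_eq_zero.1 this
  calc (B ℓ m k).card = Module.finrank ℚ (V ℓ m k) := by
        rw [Module.finrank_pi, Fintype.card_coe]
    _ ≤ Module.finrank ℚ (V ℓ m (k+1)) := LinearMap.finrank_le_finrank_of_injective hinj
    _ = (B ℓ m (k+1)).card := by rw [Module.finrank_pi, Fintype.card_coe]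

lemma hC_aux : ℓ * (ℓ+m-1) + ℓ = ℓ*ℓ + ℓ*m := by
  rcases Nat.eq_zero_or_pos (ℓ+m) with h | h
  · have h1 : ℓ = 0 := by omega
    have h2 : m = 0 := by omega
    subst h1; subst h2; rfl
  · have h1 : ℓ+m-1+1 = ℓ+m := by omega
    calc ℓ * (ℓ+m-1) + ℓ = ℓ * ((ℓ+m-1)+1) := by ring
      _ = ℓ * (ℓ+m) := by rw [h1]
      _ = ℓ*ℓ + ℓ*m := by ring

lemma rev_mem {k : ℕ} (hk : k ≤ ℓ*m) {S : Finset ℕ} (hS : S ∈ B ℓ m k) :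
    S.image (fun i => ℓ+m-1-i) ∈ B ℓ m (ℓ*m - k) := by
  obtain ⟨hsub, hcard, hsum⟩ := mem_B.1 hS
  have hlt : ∀ i ∈ S, i < ℓ+m := fun i hi => Finset.mem_range.1 (hsub hi)
  have hinj : ∀ a ∈ S, ∀ b ∈ S, ℓ+m-1-a = ℓ+m-1-b → a = b := by
    intro a ha b hb hab
    have := hlt a ha; have := hlt b hb
    omega
  refine mem_B.2 ⟨?_, ?_, ?_⟩
  · intro a ha
    obtain ⟨i, hi, rfl⟩ := Finset.mem_image.1 ha
    have := hlt i hi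
    exact Finset.mem_range.2 (by omega)
  · rw [Finset.card_image_of_injOn hinj, hcard]
  · rw [Finset.sum_image hinj]
    have hpt : (∑ i ∈ S, (ℓ+m-1-i)) + ∑ i ∈ S, i = ℓ * (ℓ+m-1) := by
      rw [← Finset.sum_add_distrib,
        Finset.sum_congr rfl (fun i hi => by have := hlt i hi; omega : ∀ i ∈ S, ℓ+m-1-i + i = ℓ+m-1),
        Finset.sum_const, hcard, smul_eq_mul]
    rw [hsum] at hpt
    have h1 := hC_aux ℓ m
    have h2 := two_T0' ℓ
    omega

lemma rev_rev {S : Finset ℕ} (hsub : S ⊆ Finset.range (ℓ+m)) :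
    (S.image (fun i => ℓ+m-1-i)).image (fun i => ℓ+m-1-i) = S := by
  rw [Finset.image_image]
  have h : ∀ i ∈ S, (fun i => ℓ+m-1-i) ((fun i => ℓ+m-1-i) i) = id i := by
    intro i hi
    have := Finset.mem_range.1 (hsub hi)
    simp only [Function.comp_apply, id]
    omega
  rw [show ((fun i => ℓ+m-1-i) ∘ (fun i => ℓ+m-1-i)) = fun i => ℓ+m-1-(ℓ+m-1-i) from rfl]
  calc S.image (fun i => ℓ+m-1-(ℓ+m-1-i)) = S.image id := Finset.image_congr (fun i hi => by
        have := Finset.mem_range.1 (hsub hi); simp only [id]; omega)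
    _ = S := Finset.image_id

lemma card_B_symm {k : ℕ} (hk : k ≤ ℓ*m) : (B ℓ m k).card = (B ℓ m (ℓ*m - k)).card := by
  refine Finset.card_nbij' (fun S => S.image (fun i => ℓ+m-1-i))
    (fun S => S.image (fun i => ℓ+m-1-i)) ?_ ?_ ?_ ?_
  · intro S hS; exact rev_mem ℓ m hk hS
  · intro S hS
    have := rev_mem ℓ m (Nat.sub_le (ℓ*m) k) hS
    rwa [Nat.sub_sub_self hk] at this
  · intro S hS; exact rev_rev ℓ m (mem_B.1 hS).1
  · intro S hS; exact rev_rev ℓ m (mem_B.1 hS).1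

/-! ### counting: subsets in the box correspond to partitions in the box -/

lemma mono_eq_of_map_eq {n : ℕ} {b b' : Fin n → ℕ} (hb : Monotone b) (hb' : Monotone b')
    (h : Multiset.map b Finset.univ.val = Multiset.map b' Finset.univ.val) : b = b' := by
  have huniv : (Finset.univ : Finset (Fin n)).val = ↑(List.finRange n) := rfl
  rw [huniv] at h
  have h2 : (↑(List.ofFn b) : Multiset ℕ) = (↑(List.ofFn b') : Multiset ℕ) := by
    rw [List.ofFn_eq_map, List.ofFn_eq_map]
    exact h
  have h3 := Multiset.coe_eq_coe.1 h2
  exact List.ofFn_inj.1 (List.Perm.eq_of_sortedLE (List.sortedLE_ofFn_iff.2 hb) (List.sortedLE_ofFn_iff.2 hb') h3)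

lemma map_univ_get {L : List ℕ} {n : ℕ} (hL : L.length = n) :
    Multiset.map (fun i : Fin n => L.get ⟨i.val, by rw [hL]; exact i.isLt⟩)
      Finset.univ.val = ↑L := by
  subst hL
  have huniv : (Finset.univ : Finset (Fin L.length)).val = ↑(List.finRange L.length) := rfl
  rw [huniv]
  have : (fun i : Fin L.length => L.get ⟨i.val, i.isLt⟩) = L.get := by
    funext i; congr
  rw [Multiset.map_coe, this, ← List.ofFn_eq_map, List.ofFn_get]

variable {ℓ m}

/-- partition parts read off from a subset -/
def partsOf (T : Finset ℕ) (hc : T.card = ℓ) : Multiset ℕ :=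
  (Multiset.map (fun i : Fin ℓ => T.orderEmbOfFin hc i - i.val) Finset.univ.val).filter (0 < ·)

lemma g_mono {T : Finset ℕ} (hc : T.card = ℓ) :
    Monotone (fun i : Fin ℓ => T.orderEmbOfFin hc i - i.val) := by
  intro i j hij
  have := strictMono_gap _ (T.orderEmbOfFin hc).strictMono (j.val - i.val) i j (by
    have : (i : ℕ) ≤ j := hij
    omega)
  simp only
  omega

lemma g_le {n : ℕ} {T : Finset ℕ} (hT : T ∈ B ℓ m n) (hc : T.card = ℓ) (i : Fin ℓ) :
    T.orderEmbOfFin hc i - i.val ≤ m := by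
  obtain ⟨hsub, -, -⟩ := mem_B.1 hT
  have hl : 0 < ℓ := i.pos
  have htop : T.orderEmbOfFin hc i + (ℓ-1 - i.val) ≤ T.orderEmbOfFin hc ⟨ℓ-1, by omega⟩ :=
    strictMono_gap _ (T.orderEmbOfFin hc).strictMono (ℓ-1 - i.val) i ⟨ℓ-1, by omega⟩ (by
      simp only [Fin.val_mk]
      omega)
  have hmem : T.orderEmbOfFin hc ⟨ℓ-1, by omega⟩ ∈ T := T.orderEmbOfFin_mem hc _
  have := Finset.mem_range.1 (hsub hmem)
  have hi := i.isLt
  omega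

lemma sum_g {n : ℕ} {T : Finset ℕ} (hT : T ∈ B ℓ m n) (hc : T.card = ℓ) :
    ∑ i : Fin ℓ, (T.orderEmbOfFin hc i - i.val) = n := by
  obtain ⟨hsub, -, hsum⟩ := mem_B.1 hT
  rw [Finset.sum_tsub_distrib _ (fun i _ => strictMono_le _ (T.orderEmbOfFin hc).strictMono i),
    sum_orderEmbOfFin, hsum]
  have h2 : ∑ i : Fin ℓ, (i : ℕ) = T0 ℓ := Fin.sum_univ_eq_sum_range (fun i => i) ℓ
  omega

lemma partsOf_sum {n : ℕ} {T : Finset ℕ} (hT : T ∈ B ℓ m n) (hc : T.card = ℓ) :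
    (partsOf (ℓ := ℓ) T hc).sum = n := by
  set M := Multiset.map (fun i : Fin ℓ => T.orderEmbOfFin hc i - i.val) Finset.univ.val with hM
  have h1 : (M.filter (0 < ·)).sum + (M.filter (fun a => ¬ 0 < a)).sum = M.sum := by
    rw [← Multiset.sum_add, Multiset.filter_add_not]
  have h2 : (M.filter (fun a => ¬ 0 < a)).sum = 0 :=
    Multiset.sum_eq_zero (fun x hx => by
      have := (Multiset.mem_filter.1 hx).2
      omega)
  have h3 : M.sum = ∑ i : Fin ℓ, (T.orderEmbOfFin hc i - i.val) := rfl
  rw [sum_g hT hc] at h3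
  show (M.filter (0 < ·)).sum = n
  omega

lemma partsOf_card (T : Finset ℕ) (hc : T.card = ℓ) :
    Multiset.card (partsOf (ℓ := ℓ) T hc) ≤ ℓ := by
  calc Multiset.card (partsOf (ℓ := ℓ) T hc)
      ≤ Multiset.card (Multiset.map (fun i : Fin ℓ => T.orderEmbOfFin hc i - i.val)
          Finset.univ.val) := Multiset.card_le_card (Multiset.filter_le _ _)
    _ = ℓ := by rw [Multiset.card_map]; exact Finset.card_univ.trans (Fintype.card_fin ℓ)

lemma partsOf_le {n : ℕ} {T : Finset ℕ} (hT : T ∈ B ℓ m n) (hc : T.card = ℓ) :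
    ∀ a ∈ partsOf (ℓ := ℓ) T hc, a ≤ m := by
  intro a ha
  have := Multiset.mem_filter.1 ha
  obtain ⟨i, -, rfl⟩ := Multiset.mem_map.1 this.1
  exact g_le hT hc i

/-- the bijection from box subsets to box partitions -/
def Phi (ℓ m : ℕ) {n : ℕ} (T : ↥(B ℓ m n)) :
    {p : n.Partition // p.parts.card ≤ ℓ ∧ ∀ a ∈ p.parts, a ≤ m} :=
  ⟨{ parts := partsOf (ℓ := ℓ) T.val (mem_B.1 T.prop).2.1
     parts_pos := fun h => (Multiset.mem_filter.1 h).2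
     parts_sum := partsOf_sum T.prop (mem_B.1 T.prop).2.1 },
   partsOf_card _ _, partsOf_le T.prop _⟩

lemma M_recover {n : ℕ} (M : Multiset ℕ) (hcard : Multiset.card M = n) :
    M = M.filter (0 < ·) + Multiset.replicate (n - Multiset.card (M.filter (0 < ·))) 0 := by
  conv_lhs => rw [← Multiset.filter_add_not (0 < ·) M]
  congr 1
  refine Multiset.eq_replicate.2 ⟨?_, fun x hx => ?_⟩
  · have h := congrArg Multiset.card (Multiset.filter_add_not (0 < ·) M)
    rw [Multiset.card_add] at h
    omega
  · have := (Multiset.mem_filter.1 hx).2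
    omega

lemma Phi_inj {n : ℕ} : Function.Injective (Phi ℓ m (n := n)) := by
  intro T T' h
  have hparts : partsOf (ℓ := ℓ) T.val (mem_B.1 T.prop).2.1
      = partsOf (ℓ := ℓ) T'.val (mem_B.1 T'.prop).2.1 :=
    congrArg (fun x => x.val.parts) h
  set hc := (mem_B.1 T.prop).2.1
  set hc' := (mem_B.1 T'.prop).2.1
  set g := fun i : Fin ℓ => T.val.orderEmbOfFin hc i - i.val with hg
  set g' := fun i : Fin ℓ => T'.val.orderEmbOfFin hc' i - i.val with hg'
  have hMcard : ∀ (S : Finset ℕ) (hcS : S.card = ℓ),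
      Multiset.card (Multiset.map (fun i : Fin ℓ => S.orderEmbOfFin hcS i - i.val)
        Finset.univ.val) = ℓ := fun S hcS => by
    rw [Multiset.card_map]; exact Finset.card_univ.trans (Fintype.card_fin ℓ)
  have hM : Multiset.map g Finset.univ.val = Multiset.map g' Finset.univ.val := by
    rw [M_recover (Multiset.map g Finset.univ.val) (hMcard _ hc),
      M_recover (Multiset.map g' Finset.univ.val) (hMcard _ hc')]
    have e1 : (Multiset.map g Finset.univ.val).filter (0 < ·)
        = (Multiset.map g' Finset.univ.val).filter (0 < ·) := hparts
    rw [e1]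
  have hgg : g = g' := mono_eq_of_map_eq (g_mono hc) (g_mono hc') hM
  have hfe : ⇑(T.val.orderEmbOfFin hc) = ⇑(T'.val.orderEmbOfFin hc') := by
    funext i
    have h1 := strictMono_le _ (T.val.orderEmbOfFin hc).strictMono i
    have h2 := strictMono_le _ (T'.val.orderEmbOfFin hc').strictMono i
    have h3 : g i = g' i := by rw [hgg]
    simp only [hg, hg'] at h3
    omega
  have hrange : (T.val : Set ℕ) = (T'.val : Set ℕ) := by
    rw [← Finset.range_orderEmbOfFin T.val hc, ← Finset.range_orderEmbOfFin T'.val hc']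
    rw [hfe]
  exact Subtype.ext (Finset.coe_injective hrange)

lemma Phi_surj {n : ℕ} : Function.Surjective (Phi ℓ m (n := n)) := by
  rintro ⟨p, hpc, hpm⟩
  set c := Multiset.card p.parts with hc_def
  set l := p.parts.sort (· ≤ ·) with hl_def
  have hlen_l : l.length = c := Multiset.length_sort _
  set L := List.replicate (ℓ - c) 0 ++ l with hL_def
  have hLlen : L.length = ℓ := by
    rw [hL_def, List.length_append, List.length_replicate, hlen_l]
    omega
  have hLsorted : L.Pairwise (· ≤ ·) := by
    rw [hL_def, List.pairwise_append]
    refine ⟨(List.pairwise_replicate).2 (Or.inr le_rfl), Multiset.pairwise_sort _ _, ?_⟩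
    intro a ha b hb
    have : a = 0 := List.eq_of_mem_replicate ha
    omega
  set bfun : Fin ℓ → ℕ := fun i => L.get ⟨i.val, by rw [hLlen]; exact i.isLt⟩ with hbfun
  have hbmono : Monotone bfun := by
    intro i j hij
    exact hLsorted.rel_get_of_le (by simp only [Fin.mk_le_mk]; exact hij)
  have hble : ∀ i, bfun i ≤ m := by
    intro i
    have hmem : bfun i ∈ L := L.get_mem _
    rw [hL_def, List.mem_append] at hmem
    rcases hmem with hmem | hmem
    · rw [List.eq_of_mem_replicate hmem]; omega
    · exact hpm _ ((Multiset.mem_sort _).1 hmem)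
  set ffun : Fin ℓ → ℕ := fun i => bfun i + i.val with hffun
  have hfstrict : StrictMono ffun := by
    intro i j hij
    have h1 : bfun i ≤ bfun j := hbmono (le_of_lt hij)
    have h2 : (i : ℕ) < j := hij
    simp only [hffun]
    omega
  set T : Finset ℕ := Finset.image ffun Finset.univ with hT_def
  have hcardT : T.card = ℓ := by
    rw [hT_def, Finset.card_image_of_injective _ hfstrict.injective, Finset.card_univ,
      Fintype.card_fin]
  have hmapb : Multiset.map bfun Finset.univ.val = ↑L := map_univ_get hLlen
  have hsumb : ∑ i : Fin ℓ, bfun i = n := by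
    have h1 : (Multiset.map bfun Finset.univ.val).sum = (↑L : Multiset ℕ).sum :=
      congrArg Multiset.sum hmapb
    have h2 : (Multiset.map bfun Finset.univ.val).sum = ∑ i : Fin ℓ, bfun i := rfl
    have h3 : (↑L : Multiset ℕ).sum = L.sum := Multiset.sum_coe L
    have h4 : L.sum = l.sum := by
      rw [hL_def, List.sum_append, List.sum_replicate, smul_zero, zero_add]
    have h5 : l.sum = p.parts.sum := by
      have : (↑l : Multiset ℕ) = p.parts := Multiset.sort_eq _ _
      rw [← this, Multiset.sum_coe]
    rw [h2, h3, h4, h5, p.parts_sum] at h1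
    exact h1
  have hT : T ∈ B ℓ m n := by
    refine mem_B.2 ⟨?_, hcardT, ?_⟩
    · intro a ha
      obtain ⟨i, -, rfl⟩ := Finset.mem_image.1 ha
      have h1 := hble i
      have h2 := i.isLt
      refine Finset.mem_range.2 ?_
      simp only [hffun]
      omega
    · rw [hT_def, Finset.sum_image (fun a _ b _ hab => hfstrict.injective hab)]
      have h1 : ∑ i : Fin ℓ, ffun i = (∑ i : Fin ℓ, bfun i) + ∑ i : Fin ℓ, (i : ℕ) := by
        rw [← Finset.sum_add_distrib]
      have h2 : ∑ i : Fin ℓ, (i : ℕ) = T0 ℓ := Fin.sum_univ_eq_sum_range (fun i => i) ℓ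
      rw [h1, h2, hsumb]
      omega
  refine ⟨⟨T, hT⟩, ?_⟩
  apply Subtype.ext
  apply Nat.Partition.ext
  show partsOf (ℓ := ℓ) T (mem_B.1 hT).2.1 = p.parts
  have hfe : ⇑(T.orderEmbOfFin (mem_B.1 hT).2.1) = ffun :=
    (Finset.orderEmbOfFin_unique (mem_B.1 hT).2.1
      (fun x => Finset.mem_image.2 ⟨x, Finset.mem_univ x, rfl⟩) hfstrict).symm
  have hgb : (fun i : Fin ℓ => T.orderEmbOfFin (mem_B.1 hT).2.1 i - i.val) = bfun := by
    funext i
    rw [show T.orderEmbOfFin (mem_B.1 hT).2.1 i = ffun i from congrFun hfe i]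
    simp only [hffun]
    omega
  rw [partsOf, hgb, hmapb]
  have hcoe : (↑L : Multiset ℕ) = ↑(List.replicate (ℓ - c) 0) + ↑l := by
    rw [hL_def]; rfl
  rw [hcoe, Multiset.filter_add]
  have hz : (↑(List.replicate (ℓ - c) 0) : Multiset ℕ).filter (0 < ·) = 0 := by
    refine Multiset.filter_eq_nil.2 (fun a ha => ?_)
    have : a = 0 := List.eq_of_mem_replicate (by exact_mod_cast ha)
    omega
  have hl2 : (↑l : Multiset ℕ).filter (0 < ·) = ↑l := by
    refine Multiset.filter_eq_self.2 (fun a ha => ?_)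
    exact p.parts_pos ((Multiset.mem_sort _).1 (by exact_mod_cast ha))
  rw [hz, hl2, zero_add]
  exact Multiset.sort_eq _ _

lemma card_part (ℓ m n : ℕ) :
    Nat.card {p : n.Partition // p.parts.card ≤ ℓ ∧ ∀ a ∈ p.parts, a ≤ m}
      = (B ℓ m n).card := by
  rw [← Nat.card_eq_finsetCard]
  exact (Nat.card_eq_of_bijective (Phi ℓ m) ⟨Phi_inj, Phi_surj⟩).symm

end SylvesterAux

/-- `pcoef ℓ m n` is the number of partitions of `n` fitting inside an `ℓ × m`
rectangle, i.e. with at most `ℓ` parts, each part at most `m`; equivalently the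
coefficient of `q^n` in the Gaussian binomial coefficient `(m+ℓ choose m)_q`. -/
noncomputable def pcoef (ℓ m n : ℕ) : ℕ :=
  Nat.card {p : n.Partition // p.parts.card ≤ ℓ ∧ ∀ a ∈ p.parts, a ≤ m}

/-- Sylvester's theorem: the coefficient sequence
`p_0(ℓ,m), …, p_{ℓm}(ℓ,m)` of `(m+ℓ choose m)_q` is unimodal:
it is weakly increasing up to `⌊ℓm/2⌋` and weakly decreasing from `⌈ℓm/2⌉` on. -/
theorem stmt3 (ℓ m : ℕ) :
    (∀ k : ℕ, k < ℓ * m / 2 → pcoef ℓ m k ≤ pcoef ℓ m (k + 1)) ∧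
    (∀ k : ℕ, (ℓ * m + 1) / 2 ≤ k → k < ℓ * m → pcoef ℓ m (k + 1) ≤ pcoef ℓ m k) := by
  open SylvesterAux in
  have hpc : ∀ n : ℕ, pcoef ℓ m n = (B ℓ m n).card := fun n => card_part ℓ m n
  constructor
  · intro k hk
    have h2k : 2*k < ℓ*m := by omega
    rw [hpc, hpc]
    exact card_B_le ℓ m k h2k
  · intro k hk1 hk2
    have hle : k + 1 ≤ ℓ*m := hk2
    have hle' : k ≤ ℓ*m := by omega
    have h2k : ℓ*m ≤ 2*k := by omega
    rw [hpc, hpc]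
    have hj : 2*(ℓ*m - (k+1)) < ℓ*m := by omega
    calc (B ℓ m (k+1)).card = (B ℓ m (ℓ*m - (k+1))).card := card_B_symm ℓ m hle
      _ ≤ (B ℓ m (ℓ*m - (k+1) + 1)).card := card_B_le ℓ m _ hj
      _ = (B ℓ m (ℓ*m - k)).card := by rw [show ℓ*m - (k+1) + 1 = ℓ*m - k by omega]
      _ = (B ℓ m k).card := (card_B_symm ℓ m hle').symm
end

section
/- For $\ell = 5, m = 6$, the three middle coefficients of $\binom{11}{5}_q$ are equal: $p_{14}(5,6) = p_{15}(5,6) = p_{16}(5,6)$, so strict unimodality in the sense of $(\circ)$ fails for $(5,6)$. -/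
open Polynomial Finset

namespace PcoefAux

/-- All antitone lists of length `k` with entries `≤ b`. -/
def gen : ℕ → ℕ → List (List ℕ)
  | 0, _ => [[]]
  | (k+1), b => (List.range (b+1)).flatMap fun a => (gen k a).map (a :: ·)

lemma mem_gen {k b : ℕ} {l : List ℕ} :
    l ∈ gen k b ↔ l.length = k ∧ List.Chain (· ≥ ·) b l := by
  induction k generalizing b l with
  | zero =>
    simp only [gen, List.mem_singleton, List.length_eq_zero_iff]
    constructor
    · rintro rfl; exact ⟨rfl, List.Chain.nil⟩
    · rintro ⟨rfl, -⟩; rfl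
  | succ k ih =>
    simp only [gen, List.mem_flatMap, List.mem_range, List.mem_map]
    constructor
    · rintro ⟨a, ha, t, ht, rfl⟩
      rcases ih.mp ht with ⟨hlen, hch⟩
      exact ⟨by simp [hlen], List.Chain.cons (Nat.lt_succ_iff.mp ha) hch⟩
    · rintro ⟨hlen, hch⟩
      cases l with
      | nil => simp at hlen
      | cons a t =>
        cases hch with
        | cons_cons hba hch =>
          exact ⟨a, Nat.lt_succ_of_le hba, t,
            ih.mpr ⟨Nat.succ_injective hlen, hch⟩, rfl⟩

lemma gen_nodup : ∀ (k b : ℕ), (gen k b).Nodup := by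
  intro k
  induction k with
  | zero => intro b; simp [gen]
  | succ k ih =>
    intro b
    rw [gen, List.nodup_flatMap]
    refine ⟨fun a _ => (ih a).map (fun x y h => by injection h), ?_⟩
    refine (List.nodup_range).imp ?_
    intro a a' hne x hx hx'
    obtain ⟨t, -, rfl⟩ := List.mem_map.mp hx
    obtain ⟨t', -, heq⟩ := List.mem_map.mp hx'
    exact hne (by injection heq.symm)

lemma sum_filter_ne_zero (l : List ℕ) : (l.filter fun a => a ≠ 0).sum = l.sum := by
  induction l with
  | nil => rfl
  | cons a t ih =>
    by_cases h : a = 0 <;> simp only [ne_eq, decide_not] at ih ⊢ <;>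
      simp [List.filter_cons, h, ih]

lemma sorted_decomp {l : List ℕ} (h : l.Pairwise (· ≥ ·)) :
    l = (l.filter fun a => a ≠ 0) ++
      List.replicate (l.length - (l.filter fun a => a ≠ 0).length) 0 := by
  induction l with
  | nil => rfl
  | cons a t ih =>
    rcases List.pairwise_cons.mp h with ⟨h1, h2⟩
    by_cases ha : a = 0
    · subst ha
      have ht : ∀ b ∈ t, b = 0 := fun b hb => Nat.le_zero.mp (h1 b hb)
      have htr : t = List.replicate t.length 0 := List.eq_replicate_of_mem ht
      have hf : (0 :: t).filter (fun a => a ≠ 0) = [] := by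
        rw [List.filter_eq_nil_iff]
        intro b hb
        rcases List.mem_cons.mp hb with rfl | hb
        · simp
        · simp [ht b hb]
      rw [hf]
      simp only [List.nil_append, List.length_nil, Nat.sub_zero, List.length_cons]
      rw [List.replicate_succ]
      exact congrArg (0 :: ·) htr
    · have hf : (a :: t).filter (fun a => a ≠ 0) = a :: t.filter (fun a => a ≠ 0) := by
        simp [List.filter_cons, ha]
      rw [hf]
      simp only [List.length_cons, List.cons_append]
      rw [Nat.succ_sub_succ]
      exact congrArg (a :: ·) (ih h2)

/-- Turn a list summing to `n` into the partition given by its nonzero entries. -/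
def toPartition (n : ℕ) (l : List ℕ) (hsum : l.sum = n) : n.Partition where
  parts := ↑(l.filter fun a => a ≠ 0)
  parts_pos := by
    intro i hi
    rw [Multiset.mem_coe, List.mem_filter] at hi
    have := hi.2
    simp only [ne_eq, decide_not, Bool.not_eq_true', decide_eq_false_iff_not] at this
    exact Nat.pos_of_ne_zero this
  parts_sum := by rw [Multiset.sum_coe, sum_filter_ne_zero, hsum]

lemma toPartition_parts (n : ℕ) (l : List ℕ) (hsum : l.sum = n) :
    (toPartition n l hsum).parts = ↑(l.filter fun a => a ≠ 0) := rfl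

lemma pcoef_eq (n : ℕ) :
    pcoef 5 6 n = ((gen 5 6).filter fun l => l.sum == n).length := by
  classical
  have key : pcoef 5 6 n = Nat.card {l : List ℕ // l ∈ gen 5 6 ∧ l.sum = n} := by
    refine (Nat.card_congr (Equiv.ofBijective
      (fun x : {l : List ℕ // l ∈ gen 5 6 ∧ l.sum = n} =>
        (⟨toPartition n x.1 x.2.2, ?_, ?_⟩ :
          {p : n.Partition // p.parts.card ≤ 5 ∧ ∀ a ∈ p.parts, a ≤ 6})) ⟨?_, ?_⟩)).symm
    · -- card bound
      obtain ⟨hlen, -⟩ := mem_gen.mp x.2.1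
      rw [toPartition_parts, Multiset.coe_card]
      calc (x.1.filter fun a => a ≠ 0).length ≤ x.1.length := List.length_filter_le _ _
        _ = 5 := hlen
    · -- entries bound
      obtain ⟨-, hch⟩ := mem_gen.mp x.2.1
      have hpw := List.isChain_iff_pairwise.mp hch
      intro a ha
      rw [toPartition_parts, Multiset.mem_coe, List.mem_filter] at ha
      exact (List.pairwise_cons.mp hpw).1 a ha.1
    · -- injective
      rintro ⟨l₁, hg₁, hs₁⟩ ⟨l₂, hg₂, hs₂⟩ heq
      have hparts : (↑(l₁.filter fun a => a ≠ 0) : Multiset ℕ)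
          = ↑(l₂.filter fun a => a ≠ 0) :=
        congrArg (fun p => (p : {p : n.Partition // _}).1.parts) heq
      obtain ⟨hlen₁, hch₁⟩ := mem_gen.mp hg₁
      obtain ⟨hlen₂, hch₂⟩ := mem_gen.mp hg₂
      have hsor₁ : l₁.Pairwise (· ≥ ·) := (List.isChain_iff_pairwise.mp hch₁).of_cons
      have hsor₂ : l₂.Pairwise (· ≥ ·) := (List.isChain_iff_pairwise.mp hch₂).of_cons
      have hfeq : (l₁.filter fun a => a ≠ 0) = (l₂.filter fun a => a ≠ 0) :=
        List.Perm.eq_of_pairwise (fun _ _ _ _ h₁ h₂ => le_antisymm h₂ h₁)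
          (hsor₁.filter _) (hsor₂.filter _) (Multiset.coe_eq_coe.mp hparts)
      apply Subtype.ext
      show l₁ = l₂
      rw [sorted_decomp hsor₁, sorted_decomp hsor₂, hfeq, hlen₁, hlen₂]
    · -- surjective
      rintro ⟨p, hc, hb⟩
      set s := Multiset.sort p.parts (· ≥ ·) with hs
      have hslen : s.length = Multiset.card p.parts := Multiset.length_sort _
      have hscoe : (↑s : Multiset ℕ) = p.parts := Multiset.sort_eq _ _
      have hsmem : ∀ a ∈ s, a ∈ p.parts := fun a ha => hscoe ▸ Multiset.mem_coe.mpr ha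
      set l := s ++ List.replicate (5 - s.length) 0 with hl
      have hlen : l.length = 5 := by
        rw [hl, List.length_append, List.length_replicate]
        omega
      have hall6 : ∀ x ∈ l, 6 ≥ x := by
        intro x hx
        rcases List.mem_append.mp hx with hx | hx
        · exact hb x (hsmem x hx)
        · rw [List.eq_of_mem_replicate hx]; exact Nat.zero_le 6
      have hpw : List.Pairwise (· ≥ ·) l := by
        rw [hl, List.pairwise_append]
        refine ⟨Multiset.pairwise_sort _ _, ?_, ?_⟩
        · exact List.pairwise_replicate.mpr (Or.inr le_rfl)
        · intro x hx y hy
          rw [List.eq_of_mem_replicate hy]; exact Nat.zero_le x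
      have hmem : l ∈ gen 5 6 := mem_gen.mpr ⟨hlen,
        List.isChain_iff_pairwise.mpr (List.pairwise_cons.mpr ⟨hall6, hpw⟩)⟩
      have hsum : l.sum = n := by
        have h1 : s.sum = p.parts.sum := by rw [← hscoe, Multiset.sum_coe]
        rw [hl, List.sum_append, List.sum_replicate, smul_zero, add_zero, h1, p.parts_sum]
      refine ⟨⟨l, hmem, hsum⟩, ?_⟩
      apply Subtype.ext
      apply Nat.Partition.ext
      show (↑(l.filter fun a => a ≠ 0) : Multiset ℕ) = p.parts
      have hfs : s.filter (fun a => a ≠ 0) = s := by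
        rw [List.filter_eq_self]
        intro a ha
        have hpos := p.parts_pos (hsmem a ha)
        simp only [ne_eq, decide_not, Bool.not_eq_true', decide_eq_false_iff_not]
        omega
      have hfr : (List.replicate (5 - s.length) 0).filter (fun a : ℕ => a ≠ 0) = [] := by
        rw [List.filter_eq_nil_iff]
        intro b hb
        simp [List.eq_of_mem_replicate hb]
      rw [hl, List.filter_append, hfs, hfr, List.append_nil, hscoe]
  rw [key]
  have e1 : {l : List ℕ // l ∈ gen 5 6 ∧ l.sum = n}
      ≃ {l : List ℕ // l ∈ (gen 5 6).filter fun l => l.sum == n} :=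
    Equiv.subtypeEquivRight (by intro l; rw [List.mem_filter]; simp)
  have e2 : {l : List ℕ // l ∈ (gen 5 6).filter fun l => l.sum == n}
      ≃ {l : List ℕ // l ∈ ((gen 5 6).filter fun l => l.sum == n).toFinset} :=
    Equiv.subtypeEquivRight (by intro l; rw [List.mem_toFinset])
  rw [Nat.card_congr (e1.trans e2), Nat.card_eq_fintype_card, Fintype.card_coe,
    List.toFinset_card_of_nodup ((gen_nodup 5 6).filter _)]

end PcoefAux

/-- For `ℓ = 5, m = 6`, the three middle coefficients of `(11 choose 5)_q`
(of degree 30) are equal: `p₁₄ = p₁₅ = p₁₆`, so strict unimodality `(∘)`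
(which requires `p₁₄ < p₁₅ > p₁₆`) fails for `(5,6)`. -/
theorem stmt14 :
    pcoef 5 6 14 = pcoef 5 6 15 ∧ pcoef 5 6 15 = pcoef 5 6 16 ∧
    ¬ (pcoef 5 6 14 < pcoef 5 6 15 ∧ pcoef 5 6 16 < pcoef 5 6 15) := by
  have h1 : pcoef 5 6 14 = pcoef 5 6 15 := by
    rw [PcoefAux.pcoef_eq, PcoefAux.pcoef_eq]; rfl
  have h2 : pcoef 5 6 15 = pcoef 5 6 16 := by
    rw [PcoefAux.pcoef_eq, PcoefAux.pcoef_eq]; rfl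
  exact ⟨h1, h2, fun h => absurd h.1 (by rw [h1]; exact lt_irrefl _)⟩
end
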